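/- For every δ₀ ∈ (0,1) there exists k₀ ∈ ℕ such that the following holds: for every integer k ≥ k₀ and every real δ with δ₀ ≤ δ ≤ 1 − 2/k such that δ·k is an integer and δ·k + k − 1 is odd, and for every point (b, c) ∈ ℝ^k × ℝ^{{(i,j) : 1≤i<j≤k}} lying in the convex hull of the set { (x, (x_i·x_j)_{1≤i<j≤k}) : x ∈ {−1,1}^k, δk·x₁ + Σ_{i=2}^k x_i ≥ 1 }, one has δk·b₁ + Σ_{i=2}^k b_i ≥ ((δ²k − 1)/4)·|Δ| + 1/2, where E = δ²k²/2 − k/2 + 1 and Δ = (Σ_{2≤i<j≤k} c_{ij} − E)/E. -/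

import Mathlib

set_option maxHeartbeats 1000000 in
lemma aux_sq (x : ℕ → ℝ) (a : ℕ) : ∀ n : ℕ,
    (∑ i ∈ Finset.Icc a n, x i) ^ 2 =
      (∑ i ∈ Finset.Icc a n, (x i) ^ 2) +
        2 * ∑ i ∈ Finset.Icc a n, ∑ j ∈ Finset.Icc (i + 1) n, x i * x j := by
  intro n
  induction n with
  | zero =>
    rcases Nat.eq_zero_or_pos a with rfl | ha
    · simp
    · rw [Finset.Icc_eq_empty (by omega)]; simp
  | succ n ih =>
    by_cases h : a ≤ n + 1
    · have hins : Finset.Icc a (n + 1) = insert (n + 1) (Finset.Icc a n) := by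
        ext i; simp [Finset.mem_Icc, Finset.mem_insert]; omega
      have hnot : (n + 1) ∉ Finset.Icc a n := by simp [Finset.mem_Icc]
      have hinner : ∀ i ∈ Finset.Icc a n,
          ∑ j ∈ Finset.Icc (i + 1) (n + 1), x i * x j =
            (∑ j ∈ Finset.Icc (i + 1) n, x i * x j) + x i * x (n + 1) := by
        intro i hi
        have hi' : i ≤ n := (Finset.mem_Icc.mp hi).2
        have : Finset.Icc (i + 1) (n + 1) = insert (n + 1) (Finset.Icc (i + 1) n) := by
          ext j; simp [Finset.mem_Icc, Finset.mem_insert]; omega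
        rw [this, Finset.sum_insert (by simp [Finset.mem_Icc])]
        ring
      rw [hins, Finset.sum_insert hnot, Finset.sum_insert hnot, Finset.sum_insert hnot,
        Finset.sum_congr rfl hinner, Finset.sum_add_distrib,
        show Finset.Icc (n + 1 + 1) (n + 1) = ∅ from Finset.Icc_eq_empty (by omega)]
      simp only [Finset.sum_empty, ← Finset.sum_mul]
      nlinarith [ih]
    · rw [Finset.Icc_eq_empty (by omega)]; simp

set_option maxHeartbeats 1000000 in
theorem stmt_10 (δ₀ : ℝ) (h0 : 0 < δ₀) (h1 : δ₀ < 1) :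
    ∃ k₀ : ℕ, ∀ k : ℕ, k₀ ≤ k → ∀ δ : ℝ, δ₀ ≤ δ → δ ≤ 1 - 2 / (k : ℝ) →
      (∃ m : ℤ, δ * k = m ∧ Odd (m + (k : ℤ) - 1)) →
      ∀ b : ℕ → ℝ, ∀ c : ℕ → ℕ → ℝ,
        (b, c) ∈ convexHull ℝ { p : (ℕ → ℝ) × (ℕ → ℕ → ℝ) |
          ∃ x : ℕ → ℝ, (∀ i, x i = 1 ∨ x i = -1) ∧
            1 ≤ δ * k * x 1 + ∑ i ∈ Finset.Icc 2 k, x i ∧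
            p = (x, fun i j => x i * x j) } →
        ∀ E Δ : ℝ, E = δ ^ 2 * k ^ 2 / 2 - k / 2 + 1 →
          Δ = ((∑ i ∈ Finset.Icc 2 k, ∑ j ∈ Finset.Icc (i + 1) k, c i j) - E) / E →
          (δ ^ 2 * k - 1) / 4 * |Δ| + 1 / 2 ≤ δ * k * b 1 + ∑ i ∈ Finset.Icc 2 k, b i := by
  refine ⟨⌈2 / δ₀ ^ 2⌉₊ + 1, fun k hk δ hδ0 hδ1 _ b c hmem E Δ hE hΔ => ?_⟩
  have hδ0' : 0 < δ := lt_of_lt_of_le h0 hδ0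
  have hkR : 2 / δ₀ ^ 2 ≤ (k : ℝ) := by
    calc 2 / δ₀ ^ 2 ≤ (⌈2 / δ₀ ^ 2⌉₊ : ℝ) := Nat.le_ceil _
    _ ≤ (k : ℝ) := by exact_mod_cast Nat.le_of_succ_le hk
  have hk1 : (1 : ℝ) ≤ (k : ℝ) := by
    have h2 : (2 : ℝ) ≤ 2 / δ₀ ^ 2 := by
      rw [le_div_iff₀ (by positivity)]; nlinarith
    linarith
  have hk0 : (0 : ℝ) < (k : ℝ) := by linarith
  set m : ℝ := δ * k with hmdef
  have hδ2k : 2 ≤ δ₀ ^ 2 * k := by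
    rw [div_le_iff₀ (by positivity)] at hkR; linarith [hkR]
  have hδk : δ₀ * k ≤ m := by
    rw [hmdef]; exact mul_le_mul_of_nonneg_right hδ0 (le_of_lt hk0)
  have hm0 : 0 < m := lt_of_lt_of_le (by positivity) hδk
  have hm2k : 2 * (k : ℝ) ≤ m ^ 2 := by
    nlinarith [mul_le_mul hδk hδk (by positivity) (le_of_lt hm0), hδ2k, hk0]
  have hmk2 : m ≤ (k : ℝ) - 2 := by
    have h2 := mul_le_mul_of_nonneg_right hδ1 (le_of_lt hk0)
    have h3 : (1 - 2 / (k : ℝ)) * k = k - 2 := by field_simp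
    rw [hmdef]; linarith [h2, h3.le, h3.ge]
  have hkm1 : (1 : ℝ) ≤ m ^ 2 - k := by nlinarith
  have hmsq : m ^ 2 = δ ^ 2 * k * k := by rw [hmdef]; ring
  have hE' : E = (m ^ 2 - k + 2) / 2 := by rw [hE, hmsq]; ring
  have hEpos : 0 < E := by rw [hE']; linarith
  have hcoef : (1 : ℝ) ≤ δ ^ 2 * k := by
    have h3 : 2 * (k : ℝ) ≤ (δ ^ 2 * k) * k := by linarith [hmsq, hm2k]
    have := (mul_le_mul_iff_of_pos_right hk0).mp (by linarith : 2 * (k : ℝ) ≤ (δ ^ 2 * k) * k)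
    linarith
  have hcoef' : (δ ^ 2 * k - 1) / 4 = (m ^ 2 - k) / (4 * k) := by
    field_simp
    linear_combination 4 * hmsq
  subst hΔ
  set T : Set ((ℕ → ℝ) × (ℕ → ℕ → ℝ)) := { p |
    (δ ^ 2 * k - 1) / 4 *
        |((∑ i ∈ Finset.Icc 2 k, ∑ j ∈ Finset.Icc (i + 1) k, p.2 i j) - E) / E| + 1 / 2 ≤
      δ * k * p.1 1 + ∑ i ∈ Finset.Icc 2 k, p.1 i } with hT
  have hconv : Convex ℝ T := by
    intro p hp q hq a a' ha ha' haa
    simp only [hT, Set.mem_setOf_eq] at hp hq ⊢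
    have e1 : (a • p + a' • q).1 1 = a * p.1 1 + a' * q.1 1 := rfl
    have e2 : ∑ i ∈ Finset.Icc 2 k, (a • p + a' • q).1 i =
        a * ∑ i ∈ Finset.Icc 2 k, p.1 i + a' * ∑ i ∈ Finset.Icc 2 k, q.1 i := by
      simp [Prod.fst_add, Prod.smul_fst, Pi.add_apply, Pi.smul_apply, smul_eq_mul,
        Finset.sum_add_distrib, Finset.mul_sum]
    have e3 : ∑ i ∈ Finset.Icc 2 k, ∑ j ∈ Finset.Icc (i + 1) k, (a • p + a' • q).2 i j =
        a * ∑ i ∈ Finset.Icc 2 k, ∑ j ∈ Finset.Icc (i + 1) k, p.2 i j +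
          a' * ∑ i ∈ Finset.Icc 2 k, ∑ j ∈ Finset.Icc (i + 1) k, q.2 i j := by
      simp [Prod.snd_add, Prod.smul_snd, Pi.add_apply, Pi.smul_apply, smul_eq_mul,
        Finset.sum_add_distrib, Finset.mul_sum]
    rw [e1, e2, e3]
    set Sp := ∑ i ∈ Finset.Icc 2 k, ∑ j ∈ Finset.Icc (i + 1) k, p.2 i j with hSp
    set Sq := ∑ i ∈ Finset.Icc 2 k, ∑ j ∈ Finset.Icc (i + 1) k, q.2 i j with hSq
    have key : (a * Sp + a' * Sq - E) / E = a * ((Sp - E) / E) + a' * ((Sq - E) / E) := by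
      field_simp
      linear_combination E * haa
    rw [key]
    have habs : |a * ((Sp - E) / E) + a' * ((Sq - E) / E)| ≤
        a * |(Sp - E) / E| + a' * |(Sq - E) / E| := by
      calc |a * ((Sp - E) / E) + a' * ((Sq - E) / E)|
          ≤ |a * ((Sp - E) / E)| + |a' * ((Sq - E) / E)| := abs_add_le _ _
        _ = a * |(Sp - E) / E| + a' * |(Sq - E) / E| := by
            rw [abs_mul, abs_mul, abs_of_nonneg ha, abs_of_nonneg ha']
    have hc0 : (0 : ℝ) ≤ (δ ^ 2 * k - 1) / 4 := by linarith
    have h5 := mul_le_mul_of_nonneg_left habs hc0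
    have h6 := mul_le_mul_of_nonneg_left hp ha
    have h7 := mul_le_mul_of_nonneg_left hq ha'
    nlinarith [h5, h6, h7, haa]
  have hsub : { p : (ℕ → ℝ) × (ℕ → ℕ → ℝ) |
      ∃ x : ℕ → ℝ, (∀ i, x i = 1 ∨ x i = -1) ∧
        1 ≤ δ * k * x 1 + ∑ i ∈ Finset.Icc 2 k, x i ∧
        p = (x, fun i j => x i * x j) } ⊆ T := by
    rintro p ⟨x, hx, hsat, rfl⟩
    simp only [hT, Set.mem_setOf_eq]
    set t := ∑ i ∈ Finset.Icc 2 k, x i with htdef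
    rw [← hmdef] at hsat ⊢
    have hsq1 : ∀ i ∈ Finset.Icc 2 k, (x i) ^ 2 = 1 := by
      intro i _; rcases hx i with h | h <;> rw [h] <;> norm_num
    have hcard : ((Finset.Icc 2 k).card : ℝ) = (k : ℝ) - 1 := by
      rw [Nat.card_Icc]
      have hk1' : 1 ≤ k := by exact_mod_cast hk1
      have : k + 1 - 2 = k - 1 := by omega
      rw [this, Nat.cast_sub hk1', Nat.cast_one]
    have hQ : ∑ i ∈ Finset.Icc 2 k, ∑ j ∈ Finset.Icc (i + 1) k, x i * x j =
        (t ^ 2 - ((k : ℝ) - 1)) / 2 := by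
      have h := aux_sq x 2 k
      rw [Finset.sum_congr rfl hsq1, Finset.sum_const, nsmul_eq_mul, mul_one, hcard] at h
      linarith [h]
    have htle : t ≤ (k : ℝ) - 1 := by
      have h := Finset.sum_le_sum
        (fun i (_ : i ∈ Finset.Icc 2 k) => by
          rcases hx i with h | h <;> rw [h] <;> norm_num : ∀ i ∈ Finset.Icc 2 k, x i ≤ 1)
      rw [Finset.sum_const, nsmul_eq_mul, mul_one, hcard] at h
      exact h
    have hA : |t ^ 2 - m ^ 2 - 1| ≤ 4 * k * (m * x 1 + t) - 2 * k := by
      rcases hx 1 with h1 | h1 <;> rw [h1] <;> rw [h1] at hsat <;>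
        rcases abs_cases (t ^ 2 - m ^ 2 - 1) with ⟨heq, hge⟩ | ⟨heq, hlt⟩ <;> rw [heq]
      · nlinarith [mul_nonneg (sub_nonneg.mpr hsat)
          (show (0:ℝ) ≤ 4 * k + m - t by linarith)]
      · nlinarith [mul_nonneg (show (0:ℝ) ≤ t - 1 + m by linarith)
          (show (0:ℝ) ≤ t + 1 - m + 4 * k by linarith)]
      · nlinarith [mul_nonneg (sub_nonneg.mpr hsat)
          (show (0:ℝ) ≤ 4 * k - t - m by linarith)]
      · nlinarith [mul_nonneg (show (0:ℝ) ≤ t - m - 1 by linarith)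
          (show (0:ℝ) ≤ t + m + 1 by linarith)]
    have hnepos : (0:ℝ) < m ^ 2 - (k : ℝ) + 2 := by linarith
    have habs2 : |(((t ^ 2 - ((k : ℝ) - 1)) / 2) - E) / E| =
        |t ^ 2 - m ^ 2 - 1| / (m ^ 2 - k + 2) := by
      rw [hE']
      have h9 : ((t ^ 2 - ((k : ℝ) - 1)) / 2 - (m ^ 2 - k + 2) / 2) / ((m ^ 2 - k + 2) / 2) =
          (t ^ 2 - m ^ 2 - 1) / (m ^ 2 - k + 2) := by
        field_simp [hnepos.ne']
        ring
      rw [h9, abs_div, abs_of_pos hnepos]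
    rw [hQ, habs2, hcoef']
    have h2 : (0:ℝ) ≤ 4 * k * (m * x 1 + t) - 2 * k := by
      linarith [hA, abs_nonneg (t ^ 2 - m ^ 2 - 1)]
    have key2 : (m ^ 2 - k) / (4 * k) * (|t ^ 2 - m ^ 2 - 1| / (m ^ 2 - k + 2)) ≤
        (m * x 1 + t) - 1 / 2 := by
      rw [div_mul_div_comm, div_le_iff₀ (by nlinarith : (0:ℝ) < 4 * k * (m ^ 2 - k + 2))]
      nlinarith [mul_le_mul_of_nonneg_left hA (by linarith : (0:ℝ) ≤ m ^ 2 - k), h2]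
    linarith [key2]
  have := convexHull_min hsub hconv hmem
  simpa only [hT, Set.mem_setOf_eq] using this
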